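/- Let K be a field, L a finite-dimensional Lie algebra over K, H ⊆ L a nilpotent Lie subalgebra, and f : L → K a linear functional centralized by H (f(⁅h, x⁆) = 0 for all h ∈ H, x ∈ L). Let u ⊆ L be a Lie subalgebra that is contained, as a submodule, in the sum of the generalized weight spaces L_χ over all weights χ of H on L that are not identically zero. Then u is isotropic for the form B_f: for all x, y ∈ u one has f(⁅x, y⁆) = 0. In particular, the nilpotent radical of a Borel subalgebra containing a Cartan subalgebra H is isotropic for B_f. -/

import Mathlib

/-- Corollary 2.3.4 (isotropy): let `H` be a nilpotent subalgebra of a finite-dimensional Lie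
algebra `L` over a field `K`, and `f : L → K` a linear functional centralized by `H`.  If a Lie
subalgebra `u ⊆ L` is contained (as a submodule) in the sum of the generalized weight spaces of
`H` on `L` attached to weights that are not identically zero, then `u` is isotropic for the
alternating form `B_f(x, y) = f ⁅x, y⁆`. -/
theorem nilradical_isotropic_for_Bf
    (K L : Type*) [Field K] [LieRing L] [LieAlgebra K L] [FiniteDimensional K L]
    (H : LieSubalgebra K L) [LieRing.IsNilpotent H]
    (f : L →ₗ[K] K) (hf : ∀ (h : H) (x : L), f ⁅(h : L), x⁆ = 0)
    (u : LieSubalgebra K L)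
    (hu : u.toSubmodule ≤
      ⨆ χ ∈ {χ : H → K | ∃ h₀ : H, χ h₀ ≠ 0},
        (LieModule.genWeightSpace L χ).toSubmodule)
    (x y : L) (hx : x ∈ u) (hy : y ∈ u) :
    f ⁅x, y⁆ = 0 := by
  -- It suffices to show f kills each generalized weight space for a nonzero weight.
  have key : ∀ χ ∈ {χ : H → K | ∃ h₀ : H, χ h₀ ≠ 0},
      (LieModule.genWeightSpace L χ).toSubmodule ≤ LinearMap.ker f := by
    rintro χ ⟨h₀, hχ⟩ v hv
    -- the action of h₀ on the weight space is χ(h₀)•1 + nilpotent, hence a unit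
    set W := LieModule.genWeightSpace L χ
    have hnil : IsNilpotent
        (LieModule.toEnd K H W h₀ - algebraMap K _ (χ h₀)) :=
      LieModule.isNilpotent_toEnd_sub_algebraMap L χ h₀
    have hunit : IsUnit (LieModule.toEnd K H W h₀) := by
      have hu' : IsUnit (algebraMap K (Module.End K W) (χ h₀)) :=
        (IsUnit.map (algebraMap K (Module.End K W)) (isUnit_iff_ne_zero.mpr hχ))
      have := hnil.isUnit_add_right_of_commute hu' (Algebra.commutes _ _).symm
      simpa using this
    -- hence surjective: v = ⁅h₀, z⁆ for some z in W
    obtain ⟨z, hz⟩ := (Module.End.isUnit_iff _).mp hunit |>.surjective ⟨v, hv⟩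
    have hz' : (⁅(h₀ : L), (z : L)⁆ : L) = v := by
      have := congrArg (Subtype.val) hz
      simpa [LieModule.toEnd_apply_apply] using this
    rw [LinearMap.mem_ker, ← hz']
    exact hf h₀ z
  have hle : u.toSubmodule ≤ LinearMap.ker f := hu.trans (iSup₂_le key)
  exact hle (u.lie_mem hx hy)
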